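/- Let c ∈ [0, 1], let θ = 2·arcsin(√c), let β ∈ ℝ, and let M'(c) be the complex 2×2 matrix !![2c−1, 2·√(c·(1−c)); 2·√(c·(1−c)), 1−2c] (the warm-start mixer with off-diagonal entries multiplied by −1). Then exp(−(i·β) • M'(c)) = R_Y(−θ) · R_Z(−2β) · R_Y(θ). -/

import Mathlib

open Matrix

/-- The single-qubit rotation `R_Y(θ)`. -/
noncomputable def RY (θ : ℝ) : Matrix (Fin 2) (Fin 2) ℂ :=
  !![((Real.cos (θ / 2) : ℝ) : ℂ), ((-Real.sin (θ / 2) : ℝ) : ℂ);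
     ((Real.sin (θ / 2) : ℝ) : ℂ), ((Real.cos (θ / 2) : ℝ) : ℂ)]

/-- The single-qubit rotation `R_Z(φ)`. -/
noncomputable def RZ (φ : ℝ) : Matrix (Fin 2) (Fin 2) ℂ :=
  !![Complex.exp (-(Complex.I * φ / 2)), 0; 0, Complex.exp (Complex.I * φ / 2)]

theorem ws_modified_mixer_exp_rotation_decomposition (c : ℝ) (hc : c ∈ Set.Icc (0 : ℝ) 1)
    (θ : ℝ) (hθ : θ = 2 * Real.arcsin (Real.sqrt c)) (β : ℝ)
    (M : Matrix (Fin 2) (Fin 2) ℂ)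
    (hM : M = !![((2 * c - 1 : ℝ) : ℂ), ((2 * Real.sqrt (c * (1 - c)) : ℝ) : ℂ);
                 ((2 * Real.sqrt (c * (1 - c)) : ℝ) : ℂ), ((1 - 2 * c : ℝ) : ℂ)]) :
    NormedSpace.exp ((-(Complex.I * β)) • M) = RY (-θ) * RZ (-2 * β) * RY θ := by
  obtain ⟨hc0, hc1⟩ := hc
  have hhalf : θ / 2 = Real.arcsin (Real.sqrt c) := by rw [hθ]; ring
  have hs : Real.sin (θ / 2) = Real.sqrt c := by
    rw [hhalf, Real.sin_arcsin (le_trans (by norm_num) (Real.sqrt_nonneg c))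
      (Real.sqrt_le_one.mpr hc1)]
  have hco : Real.cos (θ / 2) = Real.sqrt (1 - c) := by
    rw [hhalf, Real.cos_arcsin, Real.sq_sqrt hc0]
  have h1 : ((Real.sqrt c : ℝ) : ℂ) * ((Real.sqrt c : ℝ) : ℂ) = (c : ℂ) := by
    rw [← Complex.ofReal_mul, Real.mul_self_sqrt hc0]
  have h2 : ((Real.sqrt (1 - c) : ℝ) : ℂ) * ((Real.sqrt (1 - c) : ℝ) : ℂ) = 1 - (c : ℂ) := by
    rw [← Complex.ofReal_mul, Real.mul_self_sqrt (by linarith)]; push_cast; ring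
  have h3 : ((Real.sqrt c : ℝ) : ℂ) * ((Real.sqrt (1 - c) : ℝ) : ℂ)
      = ((Real.sqrt (c * (1 - c)) : ℝ) : ℂ) := by
    rw [← Complex.ofReal_mul, ← Real.sqrt_mul hc0]
  have hRYneg : RY (-θ) = !![((Real.cos (θ / 2) : ℝ) : ℂ), ((Real.sin (θ / 2) : ℝ) : ℂ);
      ((-Real.sin (θ / 2) : ℝ) : ℂ), ((Real.cos (θ / 2) : ℝ) : ℂ)] := by
    simp [RY, neg_div, Real.cos_neg, Real.sin_neg]
  have hUV : RY (-θ) * RY θ = 1 := by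
    rw [hRYneg, RY, hs, hco]
    ext i j
    fin_cases i <;> fin_cases j <;>
      simp [Matrix.mul_apply, Fin.sum_univ_two, Matrix.one_apply] <;>
      push_cast <;>
      first
        | linear_combination h1 + h2
        | linear_combination (0 : ℂ)
  have hVU : RY θ * RY (-θ) = 1 := by
    rw [hRYneg, RY, hs, hco]
    ext i j
    fin_cases i <;> fin_cases j <;>
      simp [Matrix.mul_apply, Fin.sum_univ_two, Matrix.one_apply] <;>
      push_cast <;>
      first
        | linear_combination h1 + h2
        | linear_combination (0 : ℂ)
  have hinv : (RY (-θ))⁻¹ = RY θ := Matrix.inv_eq_right_inv hUV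
  have hU : IsUnit (RY (-θ)) := ⟨⟨RY (-θ), RY θ, hUV, hVU⟩, rfl⟩
  set v : Fin 2 → ℂ := ![Complex.I * β, -(Complex.I * β)] with hv
  have hdiag : Matrix.diagonal v = !![Complex.I * β, 0; 0, -(Complex.I * β)] := by
    ext i j; fin_cases i <;> fin_cases j <;> simp [hv, Matrix.diagonal]
  have hconj : (-(Complex.I * β)) • M = RY (-θ) * Matrix.diagonal v * (RY (-θ))⁻¹ := by
    rw [hinv, hM, hRYneg, RY, hs, hco, hdiag]
    ext i j
    fin_cases i <;> fin_cases j <;>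
      simp [Matrix.mul_apply, Fin.sum_univ_two] <;>
      push_cast <;>
      first
        | linear_combination (Complex.I * β) * h2 - (Complex.I * β) * h1
        | linear_combination (-2 * Complex.I * β) * h3
        | linear_combination (Complex.I * β) * h1 - (Complex.I * β) * h2
        | linear_combination 2 * Complex.I * β * h3
        | ring
  rw [hconj, Matrix.exp_conj _ _ hU, Matrix.exp_diagonal, hinv]
  congr 2
  ext i j
  fin_cases i <;> fin_cases j <;>
    simp [hv, Matrix.diagonal, RZ, ← Complex.exp_eq_exp_ℂ] <;> ring_nf
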